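/- Let G be a disconnected graph with k ≥ 2 connected components, at least two of which are nontrivial (have at least 2 vertices). Then the geodetic hull number of the complementary prism satisfies h(G\bar{G}) = k + 1. -/

import Mathlib

open SimpleGraph

/-- The geodetic closed interval `I[u,v]`: `u`, `v`, and all vertices lying on
some shortest `u`–`v` path. -/
def geoInterval {V : Type*} (G : SimpleGraph V) (u v : V) : Set V :=
  {w | w = u ∨ w = v ∨ (G.Reachable u v ∧ G.dist u w + G.dist w v = G.dist u v)}

/-- A set is geodetically convex if it is closed under intervals. -/
def IsGeoConvex {V : Type*} (G : SimpleGraph V) (S : Set V) : Prop :=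
  ∀ u ∈ S, ∀ v ∈ S, geoInterval G u v ⊆ S

/-- The geodetic convex hull: the smallest convex set containing `S`. -/
def geoHull {V : Type*} (G : SimpleGraph V) (S : Set V) : Set V :=
  ⋂₀ {T | IsGeoConvex G T ∧ S ⊆ T}

/-- `S` is a hull set if its convex hull is the whole vertex set. -/
def IsHullSet {V : Type*} (G : SimpleGraph V) (S : Set V) : Prop :=
  geoHull G S = Set.univ

/-- The geodetic hull number: minimum cardinality of a hull set. -/
noncomputable def hullNumber {V : Type*} (G : SimpleGraph V) : ℕ :=
  sInf {n | ∃ S : Set V, S.ncard = n ∧ IsHullSet G S}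

/-- A vertex is simplicial if its closed neighborhood induces a clique. -/
def IsSimplicial {V : Type*} (G : SimpleGraph V) (v : V) : Prop :=
  ∀ a ∈ G.neighborSet v, ∀ b ∈ G.neighborSet v, a ≠ b → G.Adj a b

/-- The complementary prism `G G̅`: disjoint union of `G` (left copies) and its
complement (right copies), plus a perfect matching between corresponding vertices. -/
def compPrism {V : Type*} (G : SimpleGraph V) : SimpleGraph (V ⊕ V) where
  Adj x y :=
    match x, y with
    | .inl u, .inl w => G.Adj u w
    | .inr u, .inr w => u ≠ w ∧ ¬ G.Adj u w
    | .inl u, .inr w => u = w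
    | .inr u, .inl w => u = w
  symm := by
    constructor
    rintro (u | u) (w | w) h
    · exact h.symm
    · exact h.symm
    · exact h.symm
    · exact ⟨h.1.symm, fun a => h.2 a.symm⟩
  loopless := by
    constructor
    rintro (u | u) h
    · exact G.irrefl h
    · exact h.1 rfl

namespace CPAux

open Sum

variable {V : Type*} {G : SimpleGraph V}

/-! ### Adjacency in the complementary prism -/

lemma adj_ll {u v : V} : (compPrism G).Adj (inl u) (inl v) ↔ G.Adj u v := Iff.rfl

lemma adj_rr {u v : V} : (compPrism G).Adj (inr u) (inr v) ↔ u ≠ v ∧ ¬ G.Adj u v := Iff.rfl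

lemma adj_lr {u v : V} : (compPrism G).Adj (inl u) (inr v) ↔ u = v := Iff.rfl

lemma adj_rl {u v : V} : (compPrism G).Adj (inr u) (inl v) ↔ u = v := Iff.rfl

/-- shorthand -/
abbrev mkc (G : SimpleGraph V) (v : V) : G.ConnectedComponent := G.connectedComponentMk v

lemma not_adj_of_mkc_ne {u v : V} (h : mkc G u ≠ mkc G v) : ¬ G.Adj u v :=
  fun ha => h (ConnectedComponent.sound ha.reachable)

lemma ne_of_mkc_ne {u v : V} (h : mkc G u ≠ mkc G v) : u ≠ v :=
  fun he => h (by rw [he])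

lemma exists_other (hnt : Nontrivial G.ConnectedComponent) (u : V) :
    ∃ w : V, mkc G w ≠ mkc G u := by
  obtain ⟨E, hE⟩ := exists_ne (mkc G u)
  exact ⟨E.out, by rwa [show mkc G E.out = E from E.out_eq]⟩

/-! ### Walks and distance upper bounds -/

lemma reach_rr (hnt : Nontrivial G.ConnectedComponent) (u v : V) :
    (compPrism G).Reachable (inr u) (inr v) := by
  by_cases he : u = v
  · subst he; exact Reachable.refl _
  by_cases ha : G.Adj u v
  · obtain ⟨w, hw⟩ := exists_other hnt u
    have hwv : mkc G w ≠ mkc G v := by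
      rwa [show mkc G v = mkc G u from (ConnectedComponent.sound ha.reachable).symm]
    have h1 : (compPrism G).Adj (inr u) (inr w) :=
      ⟨(ne_of_mkc_ne hw).symm, fun h => not_adj_of_mkc_ne hw h.symm⟩
    have h2 : (compPrism G).Adj (inr w) (inr v) :=
      ⟨ne_of_mkc_ne hwv, not_adj_of_mkc_ne hwv⟩
    exact (h1.reachable).trans h2.reachable
  · exact Adj.reachable ⟨he, ha⟩

lemma dist_rr_le (hnt : Nontrivial G.ConnectedComponent) (u v : V) :
    (compPrism G).dist (inr u) (inr v) ≤ 2 := by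
  by_cases he : u = v
  · subst he; simp [SimpleGraph.dist_self]
  by_cases ha : G.Adj u v
  · obtain ⟨w, hw⟩ := exists_other hnt u
    have hwv : mkc G w ≠ mkc G v := by
      rwa [show mkc G v = mkc G u from (ConnectedComponent.sound ha.reachable).symm]
    have h1 : (compPrism G).Adj (inr u) (inr w) :=
      ⟨(ne_of_mkc_ne hw).symm, fun h => not_adj_of_mkc_ne hw h.symm⟩
    have h2 : (compPrism G).Adj (inr w) (inr v) :=
      ⟨ne_of_mkc_ne hwv, not_adj_of_mkc_ne hwv⟩
    have := SimpleGraph.dist_le (Walk.cons h1 (Walk.cons h2 Walk.nil))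
    simpa using this
  · have h1 : (compPrism G).Adj (inr u) (inr v) := ⟨he, ha⟩
    have := SimpleGraph.dist_le (Walk.cons h1 Walk.nil)
    simp at this
    omega

lemma dist_rl_le (u v : V) : (compPrism G).dist (inr u) (inl v) ≤ 2 := by
  by_cases he : u = v
  · subst he
    have h1 : (compPrism G).Adj (inr u) (inl u) := rfl
    have := SimpleGraph.dist_le (Walk.cons h1 Walk.nil)
    simp at this
    omega
  by_cases ha : G.Adj u v
  · have h1 : (compPrism G).Adj (inr u) (inl u) := rfl
    have h2 : (compPrism G).Adj (inl u) (inl v) := ha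
    have := SimpleGraph.dist_le (Walk.cons h1 (Walk.cons h2 Walk.nil))
    simpa using this
  · have h1 : (compPrism G).Adj (inr u) (inr v) := ⟨he, ha⟩
    have h2 : (compPrism G).Adj (inr v) (inl v) := rfl
    have := SimpleGraph.dist_le (Walk.cons h1 (Walk.cons h2 Walk.nil))
    simpa using this

lemma preconn (hnt : Nontrivial G.ConnectedComponent) :
    (compPrism G).Preconnected := by
  have key : ∀ x : V ⊕ V, ∃ a : V, (compPrism G).Reachable x (inr a) := by
    rintro (a | a)
    · exact ⟨a, (Adj.reachable (show (compPrism G).Adj (inl a) (inr a) from rfl))⟩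
    · exact ⟨a, Reachable.refl _⟩
  intro x y
  obtain ⟨a, hxa⟩ := key x
  obtain ⟨b, hyb⟩ := key y
  exact hxa.trans ((reach_rr hnt a b).trans hyb.symm)

lemma dist_le_three (hnt : Nontrivial G.ConnectedComponent) (x y : V ⊕ V) :
    (compPrism G).dist x y ≤ 3 := by
  rcases x with u | u
  · have h1 : (compPrism G).Adj (inl u) (inr u) := rfl
    have hne : Nonempty (V ⊕ V) := ⟨inl u⟩
    have hconn : (compPrism G).Connected := ⟨preconn hnt⟩
    have htri := Connected.dist_triangle (G := compPrism G)
      hconn (u := inl u) (v := inr u) (w := y)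
    have h2 : (compPrism G).dist (inl u) (inr u) = 1 := dist_eq_one_iff_adj.2 h1
    rcases y with v | v
    · have := dist_rl_le (G := G) u v
      omega
    · have := dist_rr_le hnt u v
      omega
  · rcases y with v | v
    · have := dist_rl_le (G := G) u v
      omega
    · have := dist_rr_le hnt u v
      omega

/-! ### Exact distances -/

lemma dist_lr_same (u : V) : (compPrism G).dist (inl u) (inr u) = 1 :=
  dist_eq_one_iff_adj.2 rfl

lemma dist_lr (hnt : Nontrivial G.ConnectedComponent) {u v : V} (h : u ≠ v) :
    (compPrism G).dist (inl u) (inr v) = 2 := by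
  have hub : (compPrism G).dist (inl u) (inr v) ≤ 2 := by
    rw [SimpleGraph.dist_comm]; exact dist_rl_le v u
  have hne : (inl u : V ⊕ V) ≠ inr v := by simp
  have hpos : 0 < (compPrism G).dist (inl u) (inr v) :=
    Reachable.pos_dist_of_ne (preconn hnt _ _) hne
  have hne1 : (compPrism G).dist (inl u) (inr v) ≠ 1 := by
    intro h1
    have : (compPrism G).Adj (inl u) (inr v) := dist_eq_one_iff_adj.1 h1
    exact h this
  omega

lemma dist_rr_adj (hnt : Nontrivial G.ConnectedComponent) {u v : V} (h : G.Adj u v) :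
    (compPrism G).dist (inr u) (inr v) = 2 := by
  have hub := dist_rr_le hnt u v
  have hne : (inr u : V ⊕ V) ≠ inr v := by simp [h.ne]
  have hpos : 0 < (compPrism G).dist (inr u) (inr v) :=
    Reachable.pos_dist_of_ne (preconn hnt _ _) hne
  have hne1 : (compPrism G).dist (inr u) (inr v) ≠ 1 := by
    intro h1
    have h2 : (compPrism G).Adj (inr u) (inr v) := dist_eq_one_iff_adj.1 h1
    exact h2.2 h
  omega

lemma dist_rr_mkc_ne {u v : V} (h : mkc G u ≠ mkc G v) :
    (compPrism G).dist (inr u) (inr v) = 1 :=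
  dist_eq_one_iff_adj.2 ⟨ne_of_mkc_ne h, not_adj_of_mkc_ne h⟩

lemma exists_mid {W : Type*} {H : SimpleGraph W} {x y : W} (h : H.dist x y = 2) :
    ∃ m, H.Adj x m ∧ H.Adj m y := by
  have hr : H.Reachable x y := Reachable.of_dist_ne_zero (by omega)
  obtain ⟨p, hp⟩ := hr.exists_walk_length_eq_dist
  rw [h] at hp
  cases p with
  | nil => simp at hp
  | cons h1 q =>
    cases q with
    | nil => simp at hp
    | cons h2 q' =>
      cases q' with
      | nil => exact ⟨_, h1, h2⟩
      | cons h3 q'' => simp [Walk.length_cons] at hp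

lemma dist_ll_mkc_ne (hnt : Nontrivial G.ConnectedComponent) {u v : V}
    (h : mkc G u ≠ mkc G v) : (compPrism G).dist (inl u) (inl v) = 3 := by
  have hub : (compPrism G).dist (inl u) (inl v) ≤ 3 := dist_le_three hnt _ _
  have hne : (inl u : V ⊕ V) ≠ inl v := by simp [ne_of_mkc_ne h]
  have hpos : 0 < (compPrism G).dist (inl u) (inl v) :=
    Reachable.pos_dist_of_ne (preconn hnt _ _) hne
  have hne1 : (compPrism G).dist (inl u) (inl v) ≠ 1 := by
    intro h1
    exact not_adj_of_mkc_ne h (adj_ll.1 (dist_eq_one_iff_adj.1 h1))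
  have hne2 : (compPrism G).dist (inl u) (inl v) ≠ 2 := by
    intro h2
    obtain ⟨m, hm1, hm2⟩ := exists_mid h2
    rcases m with c | c
    · have h1 := (adj_ll.1 hm1).reachable
      have h2 := (adj_ll.1 hm2).reachable
      exact h (ConnectedComponent.sound (h1.trans h2))
    · have hc1 : u = c := adj_lr.1 hm1
      have hc2 : c = v := adj_rl.1 hm2
      exact ne_of_mkc_ne h (hc1.trans hc2)
  omega

/-! ### Interval lemmas -/

lemma interval_self (hnt : Nontrivial G.ConnectedComponent) (x : V ⊕ V) :
    geoInterval (compPrism G) x x ⊆ {x} := by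
  rintro w (rfl | rfl | ⟨hr, hd⟩)
  · rfl
  · rfl
  · rw [SimpleGraph.dist_self] at hd
    have h0 : (compPrism G).dist x w = 0 := by omega
    have := (Reachable.dist_eq_zero_iff (preconn hnt x w)).1 h0
    simp [this.symm]

lemma interval_adj (hnt : Nontrivial G.ConnectedComponent) {x y : V ⊕ V}
    (h : (compPrism G).Adj x y) : geoInterval (compPrism G) x y ⊆ {x, y} := by
  rintro w (rfl | rfl | ⟨hr, hd⟩)
  · exact Or.inl rfl
  · exact Or.inr rfl
  · rw [dist_eq_one_iff_adj.2 h] at hd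
    rcases Nat.eq_zero_or_pos ((compPrism G).dist x w) with h0 | hp
    · exact Or.inl ((Reachable.dist_eq_zero_iff (preconn hnt x w)).1 h0).symm
    · have h0 : (compPrism G).dist w y = 0 := by omega
      exact Or.inr ((Reachable.dist_eq_zero_iff (preconn hnt w y)).1 h0)

lemma geoInterval_comm {W : Type*} (H : SimpleGraph W) (x y : W) :
    geoInterval H x y = geoInterval H y x := by
  ext w
  simp only [geoInterval, Set.mem_setOf_eq]
  constructor
  · rintro (h | h | ⟨hr, hd⟩)
    · exact Or.inr (Or.inl h)
    · exact Or.inl h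
    · exact Or.inr (Or.inr ⟨hr.symm, by
        rw [SimpleGraph.dist_comm (u := y) (v := w), SimpleGraph.dist_comm (u := w) (v := x),
          SimpleGraph.dist_comm (u := y) (v := x)]; omega⟩)
  · rintro (h | h | ⟨hr, hd⟩)
    · exact Or.inr (Or.inl h)
    · exact Or.inl h
    · exact Or.inr (Or.inr ⟨hr.symm, by
        rw [SimpleGraph.dist_comm (u := x) (v := w), SimpleGraph.dist_comm (u := w) (v := y),
          SimpleGraph.dist_comm (u := x) (v := y)]; omega⟩)

/-- Interval between left vertices of different components. -/
lemma interval_ll_subset (hnt : Nontrivial G.ConnectedComponent) {u v : V}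
    (h : mkc G u ≠ mkc G v) :
    geoInterval (compPrism G) (inl u) (inl v) ⊆
      {inl u, inl v, inr u, inr v} := by
  rintro w (rfl | rfl | ⟨hr, hd⟩)
  · exact Or.inl rfl
  · exact Or.inr (Or.inl rfl)
  · rw [dist_ll_mkc_ne hnt h] at hd
    rcases w with c | c
    · by_cases hcu : c = u
      · subst hcu; exact Or.inl rfl
      by_cases hcv : c = v
      · subst hcv; exact Or.inr (Or.inl rfl)
      by_cases hmk : mkc G c = mkc G u
      · have h3 : (compPrism G).dist (inl c) (inl v) = 3 :=
          dist_ll_mkc_ne hnt (hmk ▸ h)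
        have hpos : 0 < (compPrism G).dist (inl u) (inl c) :=
          Reachable.pos_dist_of_ne (preconn hnt _ _) (by simp [Ne.symm hcu])
        omega
      · have h3 : (compPrism G).dist (inl u) (inl c) = 3 :=
          dist_ll_mkc_ne hnt (fun he => hmk he.symm)
        have hpos : 0 < (compPrism G).dist (inl c) (inl v) :=
          Reachable.pos_dist_of_ne (preconn hnt _ _) (by simp [hcv])
        omega
    · by_cases hcu : c = u
      · subst hcu; exact Or.inr (Or.inr (Or.inl rfl))
      by_cases hcv : c = v
      · subst hcv; exact Or.inr (Or.inr (Or.inr rfl))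
      · have h1 : (compPrism G).dist (inl u) (inr c) = 2 :=
          dist_lr hnt (fun he => hcu he.symm)
        have h2 : (compPrism G).dist (inr c) (inl v) = 2 := by
          rw [SimpleGraph.dist_comm]
          exact dist_lr hnt (fun he => hcv he.symm)
        omega

/-- Interval between a left vertex and a right vertex of different components. -/
lemma interval_lr_subset (hnt : Nontrivial G.ConnectedComponent) {u v : V}
    (h : mkc G u ≠ mkc G v) :
    geoInterval (compPrism G) (inl u) (inr v) ⊆ {inl u, inr v, inr u} := by
  have huv : u ≠ v := ne_of_mkc_ne h
  rintro w (rfl | rfl | ⟨hr, hd⟩)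
  · exact Or.inl rfl
  · exact Or.inr (Or.inl rfl)
  · rw [dist_lr hnt huv] at hd
    rcases w with c | c
    · by_cases hcu : c = u
      · subst hcu; exact Or.inl rfl
      have hpos : 0 < (compPrism G).dist (inl u) (inl c) :=
        Reachable.pos_dist_of_ne (preconn hnt _ _) (by simp [Ne.symm hcu])
      by_cases hcv : c = v
      · subst hcv
        have h3 : (compPrism G).dist (inl u) (inl c) = 3 := dist_ll_mkc_ne hnt h
        have h1 : (compPrism G).dist (inl c) (inr c) = 1 := dist_lr_same c
        omega
      · have h2 : (compPrism G).dist (inl c) (inr v) = 2 := dist_lr hnt hcv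
        omega
    · by_cases hcu : c = u
      · subst hcu; exact Or.inr (Or.inr rfl)
      by_cases hcv : c = v
      · subst hcv; exact Or.inr (Or.inl rfl)
      · have h1 : (compPrism G).dist (inl u) (inr c) = 2 :=
          dist_lr hnt (fun he => hcu he.symm)
        have hpos : 0 < (compPrism G).dist (inr c) (inr v) :=
          Reachable.pos_dist_of_ne (preconn hnt _ _) (by simp [hcv])
        omega

/-! ### Interval membership lemmas (for the upper bound) -/

lemma mem_interval_third {W : Type*} {H : SimpleGraph W} {x y w : W}
    (hr : H.Reachable x y) (hd : H.dist x w + H.dist w y = H.dist x y) :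
    w ∈ geoInterval H x y := Or.inr (Or.inr ⟨hr, hd⟩)

lemma inr_mem_interval_ll_left (hnt : Nontrivial G.ConnectedComponent) {u v : V}
    (h : mkc G u ≠ mkc G v) :
    (inr u : V ⊕ V) ∈ geoInterval (compPrism G) (inl u) (inl v) := by
  apply mem_interval_third (preconn hnt _ _)
  rw [dist_ll_mkc_ne hnt h, dist_lr_same]
  rw [SimpleGraph.dist_comm]
  rw [dist_lr hnt (ne_of_mkc_ne (Ne.symm h))]

lemma inr_mem_interval_rr (hnt : Nontrivial G.ConnectedComponent) {a b c : V}
    (hab : G.Adj a b) (hca : mkc G c ≠ mkc G a) :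
    (inr c : V ⊕ V) ∈ geoInterval (compPrism G) (inr a) (inr b) := by
  have hcb : mkc G c ≠ mkc G b := by
    rwa [show mkc G b = mkc G a from (ConnectedComponent.sound hab.reachable).symm]
  apply mem_interval_third (preconn hnt _ _)
  rw [dist_rr_adj hnt hab]
  rw [show (compPrism G).dist (inr a) (inr c) = 1 from by
    rw [SimpleGraph.dist_comm]; exact dist_rr_mkc_ne hca]
  rw [dist_rr_mkc_ne hcb]

lemma inl_mem_interval (hnt : Nontrivial G.ConnectedComponent) {c v : V}
    (h : G.Adj c v) :
    (inl c : V ⊕ V) ∈ geoInterval (compPrism G) (inr c) (inl v) := by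
  apply mem_interval_third (preconn hnt _ _)
  rw [show (compPrism G).dist (inr c) (inl c) = 1 from by
    rw [SimpleGraph.dist_comm]; exact dist_lr_same c]
  rw [show (compPrism G).dist (inl c) (inl v) = 1 from dist_eq_one_iff_adj.2 h]
  rw [show (compPrism G).dist (inr c) (inl v) = 2 from by
    rw [SimpleGraph.dist_comm]
    exact dist_lr hnt h.ne']

/-! ### Hull basics -/

lemma subset_geoHull {W : Type*} (H : SimpleGraph W) (S : Set W) : S ⊆ geoHull H S :=
  fun s hs => Set.mem_sInter.2 fun _ hT => hT.2 hs

lemma geoHull_subset {W : Type*} {H : SimpleGraph W} {S T : Set W}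
    (hT : IsGeoConvex H T) (hST : S ⊆ T) : geoHull H S ⊆ T :=
  fun _ hx => (Set.mem_sInter.1 hx) T ⟨hT, hST⟩

lemma isGeoConvex_geoHull {W : Type*} (H : SimpleGraph W) (S : Set W) :
    IsGeoConvex H (geoHull H S) := by
  intro u hu v hv w hw
  apply Set.mem_sInter.2
  intro T hT
  exact hT.1 u ((Set.mem_sInter.1 hu) T hT) v ((Set.mem_sInter.1 hv) T hT) hw

/-! ### Convex sets for the lower bound -/

/-- The complement of the left copy of a component is convex. -/
lemma convex_compl_inl (hnt : Nontrivial G.ConnectedComponent) (E : G.ConnectedComponent) :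
    IsGeoConvex (compPrism G) {x | ∀ d : V, mkc G d = E → x ≠ inl d} := by
  intro x hx y hy w hw
  intro d hd hwd
  subst hwd
  rcases hw with hw | hw | ⟨hr, hsum⟩
  · exact hx d hd hw.symm
  · exact hy d hd hw.symm
  · have hxd : x ≠ inl d := hx d hd
    have hyd : y ≠ inl d := hy d hd
    have hpos1 : 0 < (compPrism G).dist x (inl d) :=
      Reachable.pos_dist_of_ne (preconn hnt _ _) hxd
    have hpos2 : 0 < (compPrism G).dist (inl d) y :=
      Reachable.pos_dist_of_ne (preconn hnt _ _) (fun he => hyd he.symm)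
    have hub : (compPrism G).dist x y ≤ 3 := dist_le_three hnt x y
    have hcase : (compPrism G).dist x (inl d) = 1 ∨ (compPrism G).dist (inl d) y = 1 := by
      omega
    -- a neighbor of `inl d` is either `inl d'` with `d' ~ d` (hence in `E`) or `inr d`
    have hnbr : ∀ z : V ⊕ V, (compPrism G).Adj z (inl d) →
        (∃ d', mkc G d' = E ∧ z = inl d') ∨ z = inr d := by
      rintro (c | c) hz
      · left
        refine ⟨c, ?_, rfl⟩
        rw [← hd]
        exact ConnectedComponent.sound (adj_ll.1 hz).reachable
      · right
        rw [adj_rl.1 hz]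
    rcases hcase with h1 | h1
    · have hadj : (compPrism G).Adj x (inl d) := dist_eq_one_iff_adj.1 h1
      rcases hnbr x hadj with ⟨d', hd', hx'⟩ | hx'
      · exact hx d' hd' hx'
      · subst hx'
        have hle : (compPrism G).dist (inr d) y ≤ 2 := by
          rcases y with e | e
          · exact dist_rl_le d e
          · exact dist_rr_le hnt d e
        have h2 : (compPrism G).dist (inl d) y = 1 := by omega
        have hadj2 : (compPrism G).Adj y (inl d) := by
          have := dist_eq_one_iff_adj.1 h2
          exact this.symm
        rcases hnbr y hadj2 with ⟨d', hd', hy'⟩ | hy'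
        · exact hy d' hd' hy'
        · subst hy'
          rw [SimpleGraph.dist_self] at hsum
          omega
    · have hadj : (compPrism G).Adj y (inl d) := by
        have := dist_eq_one_iff_adj.1 h1
        exact this.symm
      rcases hnbr y hadj with ⟨d', hd', hy'⟩ | hy'
      · exact hy d' hd' hy'
      · subst hy'
        have hle : (compPrism G).dist x (inr d) ≤ 2 := by
          rw [SimpleGraph.dist_comm]
          rcases x with e | e
          · exact dist_rl_le d e
          · exact dist_rr_le hnt d e
        have h2 : (compPrism G).dist x (inl d) = 1 := by omega
        have hadj2 : (compPrism G).Adj x (inl d) := dist_eq_one_iff_adj.1 h2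
        rcases hnbr x hadj2 with ⟨d', hd', hx'⟩ | hx'
        · exact hx d' hd' hx'
        · subst hx'
          rw [SimpleGraph.dist_self] at hsum
          omega

/-- The "matched pairs of representatives" set is convex. -/
lemma convex_pairs (hnt : Nontrivial G.ConnectedComponent)
    (ρ : G.ConnectedComponent → V) (hρ : ∀ E, mkc G (ρ E) = E) :
    IsGeoConvex (compPrism G)
      {x | ∃ E, x = inl (ρ E) ∨ x = inr (ρ E)} := by
  intro x hx y hy w hw
  obtain ⟨E, hxE⟩ := hx
  obtain ⟨E', hyE⟩ := hy
  by_cases hEE : E = E'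
  · subst hEE
    rcases hxE with rfl | rfl <;> rcases hyE with rfl | rfl
    · exact ⟨E, Or.inl (interval_self hnt _ hw)⟩
    · rcases interval_adj hnt (adj_lr.2 rfl) hw with h | h
      · exact ⟨E, Or.inl h⟩
      · exact ⟨E, Or.inr h⟩
    · rcases interval_adj hnt (adj_rl.2 rfl) hw with h | h
      · exact ⟨E, Or.inr h⟩
      · exact ⟨E, Or.inl h⟩
    · exact ⟨E, Or.inr (interval_self hnt _ hw)⟩
  · have hmd : mkc G (ρ E) ≠ mkc G (ρ E') := by
      rw [hρ, hρ]; exact hEE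
    rcases hxE with rfl | rfl <;> rcases hyE with rfl | rfl
    · rcases interval_ll_subset hnt hmd hw with h | h | h | h
      · exact ⟨E, Or.inl h⟩
      · exact ⟨E', Or.inl h⟩
      · exact ⟨E, Or.inr h⟩
      · exact ⟨E', Or.inr h⟩
    · rcases interval_lr_subset hnt hmd hw with h | h | h
      · exact ⟨E, Or.inl h⟩
      · exact ⟨E', Or.inr h⟩
      · exact ⟨E, Or.inr h⟩
    · rw [geoInterval_comm] at hw
      rcases interval_lr_subset hnt (Ne.symm hmd) hw with h | h | h
      · exact ⟨E', Or.inl h⟩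
      · exact ⟨E, Or.inr h⟩
      · exact ⟨E', Or.inr h⟩
    · rcases interval_adj hnt
        (adj_rr.2 ⟨ne_of_mkc_ne hmd, not_adj_of_mkc_ne hmd⟩) hw with h | h
      · exact ⟨E, Or.inr h⟩
      · exact ⟨E', Or.inr h⟩

/-! ### Finding an edge inside a nontrivial component -/

lemma exists_adj_in_supp {C : G.ConnectedComponent} (h : C.supp.Nontrivial) :
    ∃ a b : V, G.Adj a b ∧ mkc G a = C := by
  obtain ⟨a, ha, b, hb, hab⟩ := h
  rw [ConnectedComponent.mem_supp_iff] at ha hb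
  have hr : G.Reachable a b := ConnectedComponent.exact (ha.trans hb.symm)
  obtain ⟨p⟩ := hr
  cases p with
  | nil => exact absurd rfl hab
  | cons hadj q => exact ⟨a, _, hadj, ha⟩

end CPAux

open CPAux Sum

theorem hullNumber_compPrism_disconnected {V : Type*} [Fintype V] (G : SimpleGraph V)
    (k : ℕ) (hk : k = Nat.card G.ConnectedComponent) (hk2 : 2 ≤ k)
    (hnt : ∃ C D : G.ConnectedComponent, C ≠ D ∧
      C.supp.Nontrivial ∧ D.supp.Nontrivial) :
    hullNumber (compPrism G) = k + 1 := by
  classical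
  have hfin : Finite G.ConnectedComponent := Quot.finite _
  have hntc : Nontrivial G.ConnectedComponent := by
    rw [← Finite.one_lt_card_iff_nontrivial]
    omega
  obtain ⟨C, D₀, hCD, hCnt, hDnt⟩ := hnt
  obtain ⟨u, u', huu', huC⟩ := exists_adj_in_supp hCnt
  obtain ⟨xd, yd, hxyd, hxD⟩ := exists_adj_in_supp hDnt
  have hu'C : mkc G u' = C := by
    rw [← huC]; exact (ConnectedComponent.sound huu'.reachable).symm
  -- the representative function
  set r : G.ConnectedComponent → V := fun E => if E = C then u else E.out with hr_def
  have hrE : ∀ E, mkc G (r E) = E := by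
    intro E
    by_cases hEC : E = C
    · subst hEC; simp [hr_def, huC]
    · simp [hr_def, hEC]
      exact E.out_eq
  have hrC : r C = u := by simp [hr_def]
  -- the candidate hull set
  set S : Set (V ⊕ V) := insert (inl u') (Set.range fun E => (inl (r E) : V ⊕ V)) with hS_def
  -- S is a hull set
  have hhull : IsHullSet (compPrism G) S := by
    have hSsub := subset_geoHull (compPrism G) S
    have hconv := isGeoConvex_geoHull (compPrism G) S
    have hmemL : ∀ E, (inl (r E) : V ⊕ V) ∈ geoHull (compPrism G) S :=
      fun E => hSsub (Set.mem_insert_of_mem _ ⟨E, rfl⟩)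
    have hmemu' : (inl u' : V ⊕ V) ∈ geoHull (compPrism G) S := hSsub (Set.mem_insert _ _)
    -- step 1 : all matched representatives, and inr u'
    have hstep1 : ∀ a : V, (inl a : V ⊕ V) ∈ geoHull (compPrism G) S →
        (inr a : V ⊕ V) ∈ geoHull (compPrism G) S := by
      intro a ha
      obtain ⟨E', hE'⟩ := exists_ne (mkc G a)
      have h1 : mkc G a ≠ mkc G (r E') := by rw [hrE]; exact fun he => hE' he.symm
      exact hconv _ ha _ (hmemL E') (inr_mem_interval_ll_left hntc h1)
    have hru : (inr u : V ⊕ V) ∈ geoHull (compPrism G) S := by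
      have := hstep1 u (by rw [← hrC]; exact hmemL C)
      exact this
    have hru' : (inr u' : V ⊕ V) ∈ geoHull (compPrism G) S := hstep1 u' hmemu'
    -- step 2 : all right vertices
    have hstep2 : ∀ c : V, (inr c : V ⊕ V) ∈ geoHull (compPrism G) S := by
      intro c
      by_cases hc : mkc G c = C
      · -- use the edge in D₀
        have hxC : mkc G xd ≠ C := by rw [hxD]; exact fun he => hCD he.symm
        have hyD : mkc G yd = D₀ := by
          rw [← hxD]; exact (ConnectedComponent.sound hxyd.reachable).symm
        have hrx : (inr xd : V ⊕ V) ∈ geoHull (compPrism G) S := by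
          apply hconv _ hru _ hru'
          exact inr_mem_interval_rr hntc huu' (by rw [huC]; exact hxC)
        have hry : (inr yd : V ⊕ V) ∈ geoHull (compPrism G) S := by
          apply hconv _ hru _ hru'
          refine inr_mem_interval_rr hntc huu' ?_
          rw [hyD, huC]
          exact fun he => hCD he.symm
        apply hconv _ hrx _ hry
        refine inr_mem_interval_rr hntc hxyd ?_
        rw [hc, hxD]
        exact hCD
      · apply hconv _ hru _ hru'
        refine inr_mem_interval_rr hntc huu' ?_
        rw [huC]
        exact hc
    -- step 3 : all left vertices, by walking within a component
    have hstep3 : ∀ a : V, (inl a : V ⊕ V) ∈ geoHull (compPrism G) S → ∀ c : V,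
        ∀ _ : G.Walk a c, (inl c : V ⊕ V) ∈ geoHull (compPrism G) S := by
      intro a ha c p
      induction p with
      | nil => exact ha
      | @cons x y z hadj q ih =>
        apply ih
        exact hconv _ (hstep2 y) _ ha (inl_mem_interval hntc hadj.symm)
    have hall : ∀ x : V ⊕ V, x ∈ geoHull (compPrism G) S := by
      rintro (c | c)
      · have hE := hrE (mkc G c)
        have hreach : G.Reachable (r (mkc G c)) c := ConnectedComponent.exact hE
        obtain ⟨p⟩ := hreach
        exact hstep3 _ (hmemL (mkc G c)) c p
      · exact hstep2 c
    exact Set.eq_univ_of_forall hall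
  -- cardinality of S
  have hrinj : Function.Injective fun E => (inl (r E) : V ⊕ V) := by
    intro E E' h
    have : r E = r E' := by simpa using h
    rw [← hrE E, ← hrE E', this]
  have hu'notin : (inl u' : V ⊕ V) ∉ Set.range fun E => (inl (r E) : V ⊕ V) := by
    rintro ⟨E, hE⟩
    have h1 : r E = u' := by simpa using hE
    have h2 : E = C := by rw [← hrE E, h1, hu'C]
    rw [h2, hrC] at h1
    exact huu'.ne h1
  have hScard : S.ncard = k + 1 := by
    rw [hS_def, Set.ncard_insert_of_notMem hu'notin (Set.toFinite _)]
    have h1 : (Set.range fun E => (inl (r E) : V ⊕ V)).ncard = k := by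
      rw [← Nat.card_coe_set_eq, Nat.card_range_of_injective hrinj, hk]
    omega
  -- lower bound: every hull set has at least k+1 elements
  have hlb : ∀ n ∈ {n | ∃ S : Set (V ⊕ V), S.ncard = n ∧ IsHullSet (compPrism G) S},
      k + 1 ≤ n := by
    rintro n ⟨T, hTcard, hThull⟩
    -- every component's left copy meets T
    have hmeet : ∀ E : G.ConnectedComponent, ∃ d : V, mkc G d = E ∧ inl d ∈ T := by
      intro E
      by_contra hcon
      push_neg at hcon
      have hsub : T ⊆ {x | ∀ d : V, mkc G d = E → x ≠ inl d} := by
        intro x hx d hd heq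
        exact hcon d hd (heq ▸ hx)
      have := geoHull_subset (convex_compl_inl hntc E) hsub
      rw [hThull] at this
      have hd : (inl E.out : V ⊕ V) ∈ {x | ∀ d : V, mkc G d = E → x ≠ inl d} :=
        this (Set.mem_univ _)
      exact hd E.out E.out_eq rfl
    choose φ hφ1 hφ2 using hmeet
    have hTfin : T.Finite := Set.toFinite T
    -- the injection comp → T
    have hg : ∀ E, (inl (φ E) : V ⊕ V) ∈ T := hφ2
    set g : G.ConnectedComponent → T := fun E => ⟨inl (φ E), hg E⟩ with hg_def
    have hginj : Function.Injective g := by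
      intro E E' h
      have h1 : φ E = φ E' := by
        have := congrArg Subtype.val h
        simpa [hg_def] using this
      rw [← hφ1 E, ← hφ1 E', h1]
    have hk_le : k ≤ n := by
      have := Nat.card_le_card_of_injective g hginj
      rwa [← hk, Nat.card_coe_set_eq, hTcard] at this
    rcases Nat.lt_or_ge k n with h | h
    · omega
    · -- n = k : derive a contradiction
      exfalso
      have hkn : n = k := by omega
      have hbij : Function.Bijective g := by
        rw [Nat.bijective_iff_injective_and_card]
        refine ⟨hginj, ?_⟩
        rw [← hk, Nat.card_coe_set_eq, hTcard, hkn]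
      -- T consists exactly of the inl (φ E)
      have hTsub : T ⊆ {x | ∃ E, x = inl (φ E) ∨ x = inr (φ E)} := by
        intro x hx
        obtain ⟨E, hE⟩ := hbij.2 ⟨x, hx⟩
        have : (inl (φ E) : V ⊕ V) = x := congrArg Subtype.val hE
        exact ⟨E, Or.inl this.symm⟩
      have hhsub := geoHull_subset (convex_pairs hntc φ hφ1) hTsub
      rw [hThull] at hhsub
      -- a vertex of C different from φ C
      obtain ⟨a, ha, b, hb, hab⟩ := hCnt
      rw [ConnectedComponent.mem_supp_iff] at ha hb
      have hex : ∃ d : V, mkc G d = C ∧ d ≠ φ C := by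
        by_cases haφ : a = φ C
        · exact ⟨b, hb, fun he => hab (by rw [haφ, he])⟩
        · exact ⟨a, ha, haφ⟩
      obtain ⟨d, hdC, hdφ⟩ := hex
      have := hhsub (Set.mem_univ (inl d : V ⊕ V))
      obtain ⟨E, hE | hE⟩ := this
      · have h1 : d = φ E := by simpa using hE
        have h2 : E = C := by rw [← hφ1 E, ← h1, hdC]
        exact hdφ (h2 ▸ h1)
      · simp at hE
  -- conclude
  have hmem : k + 1 ∈ {n | ∃ S : Set (V ⊕ V), S.ncard = n ∧ IsHullSet (compPrism G) S} :=
    ⟨S, hScard, hhull⟩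
  exact le_antisymm (Nat.sInf_le hmem) (le_csInf ⟨k + 1, hmem⟩ hlb)
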